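/- Let α be irrational with bounded partial quotients. Then there exist positive constants C₁, C₂ such that for every k ∈ ℕ, every interval arising from the partition of the circle 𝕋 = ℝ/ℤ by the points 0, −α, −2α, …, −(k−1)α has length at least C₂/k and less than C₁/k. -/

import Mathlib

open scoped Classical

lemma fract_fract_sub (x y : ℝ) : Int.fract (Int.fract x - Int.fract y) = Int.fract (x - y) := by
  have h : Int.fract x - Int.fract y = (x - y) - ((⌊x⌋ - ⌊y⌋ : ℤ) : ℝ) := by
    rw [Int.fract, Int.fract]; push_cast; ring
  rw [h, Int.fract_sub_intCast]

lemma key0 (x : ℝ) (p : ℤ) (h : |x - p| < 1) :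
    Int.fract x ≤ |x - p| ∨ Int.fract (-x) ≤ |x - p| := by
  rcases le_or_gt (p : ℝ) x with h1 | h1
  · left
    have h0 : 0 ≤ x - p := by linarith
    have h2 : x - p < 1 := by rwa [abs_of_nonneg h0] at h
    have : Int.fract x = x - p := by
      rw [← Int.fract_sub_intCast x p, Int.fract_eq_self.2 ⟨h0, h2⟩]
    rw [this, abs_of_nonneg h0]
  · right
    have h0 : 0 ≤ -x + p := by linarith
    have h2 : -x + p < 1 := by
      rw [abs_sub_comm, abs_of_nonneg (by linarith : (0:ℝ) ≤ p - x)] at h; linarith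
    have : Int.fract (-x) = -x + p := by
      rw [← Int.fract_add_intCast (-x) p, Int.fract_eq_self.2 ⟨h0, h2⟩]
    rw [this, abs_sub_comm, abs_of_nonneg (by linarith : (0:ℝ) ≤ p - x)]; linarith

lemma ne_int' (α : ℝ) (hα : Irrational α) (m : ℤ) (hm : m ≠ 0) (z : ℤ) : (m:ℝ) * α ≠ z :=
  (hα.intCast_mul hm).ne_int z

lemma hba_int (α B : ℝ) (hB : 0 < B)
    (h : ∀ (p : ℤ) (n : ℕ), 0 < n → B / (n : ℝ) ^ 2 ≤ |α - (p : ℝ) / (n : ℝ)|)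
    (p m : ℤ) (hm : m ≠ 0) : B / |(m:ℝ)| ≤ |(m:ℝ) * α - p| := by
  have hu : 0 < m.natAbs := Int.natAbs_pos.2 hm
  have habs : ((m.natAbs : ℕ) : ℝ) = |(m:ℝ)| := by rw [Nat.cast_natAbs, Int.cast_abs]
  have hm' : (m:ℝ) ≠ 0 := by exact_mod_cast hm
  have hu' : (0:ℝ) < |(m:ℝ)| := abs_pos.2 hm'
  have key1 : |(m:ℝ)*α - p| = |(m:ℝ)| * |α - (p:ℝ)/(m:ℝ)| := by
    rw [← abs_mul]; congr 1; field_simp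
  have h1 : B / |(m:ℝ)|^2 ≤ |α - (p:ℝ)/(m:ℝ)| := by
    rcases le_or_gt 0 m with hm0 | hm0
    · have h2 := h p m.natAbs hu
      rw [habs, abs_of_nonneg (by exact_mod_cast hm0 : (0:ℝ) ≤ m)] at h2
      rwa [abs_of_nonneg (by exact_mod_cast hm0 : (0:ℝ) ≤ m)]
    · have h2 := h (-p) m.natAbs hu
      rw [habs, abs_of_neg (by exact_mod_cast hm0 : (m:ℝ) < 0)] at h2
      rw [abs_of_neg (by exact_mod_cast hm0 : (m:ℝ) < 0)]
      push_cast at h2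
      rwa [neg_div_neg_eq] at h2
  rw [key1]
  calc B / |(m:ℝ)| = |(m:ℝ)| * (B / |(m:ℝ)|^2) := by field_simp
    _ ≤ |(m:ℝ)| * |α - (p:ℝ)/(m:ℝ)| := mul_le_mul_of_nonneg_left h1 (le_of_lt hu')

lemma low' (α B : ℝ)
    (hba : ∀ (p m : ℤ), m ≠ 0 → B / |(m:ℝ)| ≤ |(m:ℝ) * α - p|)
    (m : ℤ) (hm : m ≠ 0) : B / |(m:ℝ)| ≤ Int.fract ((m:ℝ) * α) := by
  have h := hba ⌊(m:ℝ) * α⌋ m hm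
  have h2 : |(m:ℝ) * α - ⌊(m:ℝ)*α⌋| = Int.fract ((m:ℝ)*α) := by
    rw [show (m:ℝ)*α - (⌊(m:ℝ)*α⌋:ℝ) = Int.fract ((m:ℝ)*α) from rfl]
    exact abs_of_nonneg (Int.fract_nonneg _)
  rwa [h2] at h

lemma dir (α : ℝ) (n : ℕ) (hn : 0 < n) :
    ∃ q : ℕ, 1 ≤ q ∧ q ≤ n ∧
      (Int.fract ((q:ℝ) * α) ≤ 1/((n:ℝ)+1) ∨ Int.fract (-((q:ℝ) * α)) ≤ 1/((n:ℝ)+1)) := by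
  obtain ⟨j, q, hq0, hqn, hd⟩ := Real.exists_int_int_abs_mul_sub_le α hn
  have h1 : |(q:ℝ) * α - j| < 1 := by
    have h2 : 1/((n:ℝ)+1) < 1 := by
      rw [div_lt_one (by positivity)]
      have : (1:ℝ) ≤ n := by exact_mod_cast hn
      linarith
    linarith [hd]
  refine ⟨q.toNat, by omega, by omega, ?_⟩
  have hcast : ((q.toNat : ℕ) : ℝ) = (q : ℝ) := by
    exact_mod_cast Int.toNat_of_nonneg (le_of_lt hq0)
  rw [hcast]
  rcases key0 ((q:ℝ)*α) j h1 with h | h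
  · exact Or.inl (le_trans h hd)
  · exact Or.inr (le_trans h hd)

lemma lemB (α B : ℝ) (hα : Irrational α) (hB : 0 < B) (hB1 : B ≤ 1)
    (hlow : ∀ m : ℤ, m ≠ 0 → B / |(m:ℝ)| ≤ Int.fract ((m:ℝ) * α))
    (n : ℕ) (hn : 0 < n) :
    ∃ m : ℕ, 1 ≤ m ∧ m ≤ n ∧ Int.fract ((m:ℝ) * α) < 1 / (B * n) := by
  have hn' : (0:ℝ) < n := by exact_mod_cast hn
  have hBn : 0 < B * n := by positivity
  set S := Finset.Icc 1 n with hS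
  have hSne : S.Nonempty := ⟨1, by rw [hS]; exact Finset.mem_Icc.2 ⟨le_refl 1, hn⟩⟩
  obtain ⟨q, hqS, hq⟩ := S.exists_min_image (fun m : ℕ => Int.fract ((m:ℝ)*α)) hSne
  obtain ⟨r, hrS, hr⟩ := S.exists_min_image (fun m : ℕ => Int.fract (-((m:ℝ)*α))) hSne
  rw [hS, Finset.mem_Icc] at hqS hrS
  refine ⟨q, hqS.1, hqS.2, ?_⟩
  -- key fact A: min of the two one-sided minima is ≤ 1/(n+1)
  obtain ⟨q₀, hq₀1, hq₀n, hq₀⟩ := dir α n hn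
  have hq₀S : q₀ ∈ S := Finset.mem_Icc.2 ⟨hq₀1, hq₀n⟩
  have hsmall : Int.fract ((q:ℝ)*α) ≤ 1/((n:ℝ)+1) ∨ Int.fract (-((r:ℝ)*α)) ≤ 1/((n:ℝ)+1) := by
    rcases hq₀ with h | h
    · exact Or.inl (le_trans (hq q₀ hq₀S) h)
    · exact Or.inr (le_trans (hr q₀ hq₀S) h)
  have hfin : (1:ℝ)/((n:ℝ)+1) < 1/(B*n) := by
    apply one_div_lt_one_div_of_lt hBn
    nlinarith
  rcases hsmall with h | h
  · exact lt_of_le_of_lt h hfin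
  -- now the hard case: the negative-side minimum δm is small
  by_cases hcase : Int.fract ((q:ℝ)*α) ≤ Int.fract (-((r:ℝ)*α))
  · exact lt_of_le_of_lt (le_trans hcase h) hfin
  push_neg at hcase
  -- δm := fract(-(r α)) < δp := fract(q α)
  have hrne : ((r:ℤ)) ≠ 0 := by
    have := hrS.1; omega
  have hlr : B / (r:ℝ) ≤ Int.fract (-((r:ℝ)*α)) := by
    have h2 := hlow (-(r:ℤ)) (by simpa using hrne)
    have e1 : |((-(r:ℤ) : ℤ):ℝ)| = (r:ℝ) := by
      push_cast
      rw [abs_neg, abs_of_nonneg (by positivity)]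
    have e2 : ((-(r:ℤ) : ℤ):ℝ) * α = -((r:ℝ)*α) := by push_cast; ring
    rwa [e1, e2] at h2
  have hrpos : (0:ℝ) < r := by
    have := hrS.1
    exact_mod_cast Nat.lt_of_lt_of_le Nat.zero_lt_one this
  have hrBn : B * n < r := by
    have h3 : B / (r:ℝ) ≤ 1/((n:ℝ)+1) := le_trans hlr h
    rw [div_le_div_iff₀ hrpos (by positivity)] at h3
    nlinarith
  -- Claim: for 1 ≤ m < r, fract(-(m α)) ≥ fract(q α)
  have claim : ∀ m : ℕ, 1 ≤ m → m < r → Int.fract ((q:ℝ)*α) ≤ Int.fract (-((m:ℝ)*α)) := by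
    intro m hm1 hmr
    by_contra hcon
    push_neg at hcon
    have hmS : m ∈ S := Finset.mem_Icc.2 ⟨hm1, le_trans (le_of_lt hmr) hrS.2⟩
    have h3 : Int.fract (-((r:ℝ)*α)) ≤ Int.fract (-((m:ℝ)*α)) := hr m hmS
    have hne : Int.fract (-((r:ℝ)*α)) ≠ Int.fract (-((m:ℝ)*α)) := by
      intro heq
      obtain ⟨z, hz⟩ := Int.fract_eq_fract.1 heq
      have : (((m:ℤ) - r : ℤ):ℝ) * α = (z : ℤ) := by push_cast; push_cast at hz; linarith
      exact ne_int' α hα ((m:ℤ) - r) (by omega) z this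
    have h4 : Int.fract (-((r:ℝ)*α)) < Int.fract (-((m:ℝ)*α)) := lt_of_le_of_ne h3 hne
    -- consider m' = r - m
    have hm'S : r - m ∈ S := Finset.mem_Icc.2 ⟨by omega, by omega⟩
    have hfr : Int.fract (((r - m : ℕ):ℝ) * α)
        = Int.fract (-((m:ℝ)*α)) - Int.fract (-((r:ℝ)*α)) := by
      have e1 : ((r - m : ℕ):ℝ) * α = (-((m:ℝ)*α)) - (-((r:ℝ)*α)) := by
        rw [Nat.cast_sub (le_of_lt hmr)]; ring
      rw [e1, ← fract_fract_sub]
      apply Int.fract_eq_self.2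
      constructor
      · linarith
      · have := Int.fract_lt_one (-((m:ℝ)*α))
        have := Int.fract_nonneg (-((r:ℝ)*α))
        linarith
    have h5 := hq (r - m) hm'S
    rw [hfr] at h5
    have h6 := Int.fract_nonneg (-((r:ℝ)*α))
    linarith
  -- finish
  rcases Nat.lt_or_ge r 2 with hr2 | hr2
  · -- r = 1, so B*n < 1
    have hr1 : r = 1 := by omega
    have hBn1 : B * n < 1 := by rw [hr1] at hrBn; exact_mod_cast (by simpa using hrBn)
    have : Int.fract ((q:ℝ)*α) < 1 := Int.fract_lt_one _
    have h7 : (1:ℝ) < 1/(B*n) := by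
      rw [lt_div_iff₀ hBn]; linarith
    linarith
  · obtain ⟨q₁, h11, h12, hd⟩ := dir α (r - 1) (by omega)
    have hcast : ((r - 1 : ℕ):ℝ) + 1 = (r:ℝ) := by
      rw [Nat.cast_sub (by omega : 1 ≤ r)]; ring
    rw [hcast] at hd
    have hq₁S : q₁ ∈ S := Finset.mem_Icc.2 ⟨h11, by omega⟩
    have hir : (1:ℝ)/(r:ℝ) < 1/(B*n) := one_div_lt_one_div_of_lt hBn hrBn
    rcases hd with h' | h'
    · exact lt_of_le_of_lt (le_trans (hq q₁ hq₁S) h') hir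
    · exact lt_of_le_of_lt (le_trans (claim q₁ h11 (by omega)) h') hir

/-- Three-distance estimate: for `α` irrational with bounded partial quotients
(equivalently, badly approximable), there are constants `C₁, C₂ > 0` such that for every
`k ≥ 1`, each gap of the partition of the circle `ℝ/ℤ` by the points `0, -α, …, -(k-1)α`
has length at least `C₂/k` and less than `C₁/k`.  Here points of the circle are
represented by their fractional parts and the gap at a point `a` of the orbit set is the
circular distance from `a` to the next point of the set. -/
theorem stmt3 (α : ℝ) (hα : Irrational α)
    (hbpq : ∃ B : ℝ, 0 < B ∧ ∀ (p : ℤ) (n : ℕ), 0 < n →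
      B / (n : ℝ) ^ 2 ≤ |α - (p : ℝ) / (n : ℝ)|) :
    ∃ C₁ C₂ : ℝ, 0 < C₁ ∧ 0 < C₂ ∧ ∀ k : ℕ, 0 < k →
      ∀ a ∈ (Finset.range k).image (fun j : ℕ => Int.fract (-(j : ℝ) * α)),
        C₂ / (k : ℝ) ≤
          sInf (insert (1 : ℝ)
            {d : ℝ | ∃ b ∈ (Finset.range k).image (fun j : ℕ => Int.fract (-(j : ℝ) * α)),
              b ≠ a ∧ d = Int.fract (b - a)}) ∧
        sInf (insert (1 : ℝ)
            {d : ℝ | ∃ b ∈ (Finset.range k).image (fun j : ℕ => Int.fract (-(j : ℝ) * α)),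
              b ≠ a ∧ d = Int.fract (b - a)}) < C₁ / (k : ℝ) := by
  obtain ⟨B, hB, hbpq⟩ := hbpq
  have hba : ∀ (p m : ℤ), m ≠ 0 → B / |(m:ℝ)| ≤ |(m:ℝ) * α - p| := hba_int α B hB hbpq
  have hlow : ∀ m : ℤ, m ≠ 0 → B / |(m:ℝ)| ≤ Int.fract ((m:ℝ) * α) := low' α B hba
  have hlowneg : ∀ m : ℤ, m ≠ 0 → B / |(m:ℝ)| ≤ Int.fract ((m:ℝ) * (-α)) := by
    intro m hm
    have h1 := hlow (-m) (by omega)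
    have e1 : |((-m : ℤ):ℝ)| = |(m:ℝ)| := by push_cast; rw [abs_neg]
    have e2 : ((-m : ℤ):ℝ) * α = (m:ℝ) * (-α) := by push_cast; ring
    rwa [e1, e2] at h1
  have hB1 : B < 1 := by
    have h1 := hlow 1 one_ne_zero
    have h2 : Int.fract (((1:ℤ):ℝ) * α) < 1 := Int.fract_lt_one _
    simp only [Int.cast_one, one_mul, abs_one, div_one] at h1 h2
    linarith
  -- injectivity
  have hinj : ∀ i j : ℕ, i ≠ j →
      Int.fract (-(i:ℝ) * α) ≠ Int.fract (-(j:ℝ) * α) := by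
    intro i j hij heq
    obtain ⟨z, hz⟩ := Int.fract_eq_fract.1 heq
    have : (((j:ℤ) - i : ℤ):ℝ) * α = (z:ℝ) := by push_cast; linarith
    exact ne_int' α hα ((j:ℤ) - i) (by omega) z this
  have compm : ∀ i j : ℕ,
      Int.fract (Int.fract (-(i:ℝ) * α) - Int.fract (-(j:ℝ) * α))
        = Int.fract ((((j:ℤ) - i : ℤ):ℝ) * α) := by
    intro i j
    rw [fract_fract_sub]
    congr 1
    push_cast
    ring
  refine ⟨1 + 4/B, B, by positivity, hB, ?_⟩
  intro k hk a ha
  obtain ⟨j, hj, rfl⟩ := Finset.mem_image.1 ha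
  rw [Finset.mem_range] at hj
  have hk' : (0:ℝ) < k := by exact_mod_cast hk
  have hk1 : (1:ℝ) ≤ k := by exact_mod_cast hk
  constructor
  · -- lower bound
    apply le_csInf ⟨1, Set.mem_insert 1 _⟩
    rintro x hx
    rcases hx with rfl | ⟨b, hb, hbne, rfl⟩
    · rw [div_le_one hk']; linarith
    · obtain ⟨i, hi, rfl⟩ := Finset.mem_image.1 hb
      rw [Finset.mem_range] at hi
      have hij : i ≠ j := fun h => hbne (by rw [h])
      rw [compm i j]
      have hm : ((j:ℤ) - i) ≠ 0 := by omega
      have h1 := hlow ((j:ℤ) - i) hm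
      have h2 : |(((j:ℤ) - i : ℤ):ℝ)| ≤ (k:ℝ) := by
        have : |(j:ℤ) - i| ≤ (k:ℤ) := by rw [abs_le]; omega
        calc |(((j:ℤ) - i : ℤ):ℝ)| = ((|(j:ℤ) - i| : ℤ):ℝ) := by rw [Int.cast_abs]
          _ ≤ ((k:ℤ):ℝ) := by exact_mod_cast this
          _ = (k:ℝ) := by push_cast; ring
      have h3 : (0:ℝ) < |(((j:ℤ) - i : ℤ):ℝ)| := by
        rw [abs_pos]
        exact_mod_cast hm
      calc B / (k:ℝ) ≤ B / |(((j:ℤ) - i : ℤ):ℝ)| := by gcongr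
        _ ≤ _ := h1
  · -- upper bound
    have hbdd : BddBelow (insert (1:ℝ)
        {d : ℝ | ∃ b ∈ (Finset.range k).image (fun j : ℕ => Int.fract (-(j : ℝ) * α)),
          b ≠ Int.fract (-(j:ℝ)*α) ∧ d = Int.fract (b - Int.fract (-(j:ℝ)*α))}) := by
      refine ⟨0, ?_⟩
      rintro x (rfl | ⟨b, hb, hbne, rfl⟩)
      · norm_num
      · exact Int.fract_nonneg _
    have habs : ∀ x ∈ (insert (1:ℝ)
        {d : ℝ | ∃ b ∈ (Finset.range k).image (fun j : ℕ => Int.fract (-(j : ℝ) * α)),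
          b ≠ Int.fract (-(j:ℝ)*α) ∧ d = Int.fract (b - Int.fract (-(j:ℝ)*α))}),
        x < (1 + 4/B)/(k:ℝ) → sInf _ < (1 + 4/B)/(k:ℝ) :=
      fun x hx hlt => lt_of_le_of_lt (csInf_le hbdd hx) hlt
    rcases Nat.lt_or_ge k 2 with hk2 | hk2
    · -- k = 1
      apply habs 1 (Set.mem_insert 1 _)
      have hk1' : k = 1 := by omega
      rw [hk1']
      push_cast
      rw [div_one]
      have : 0 < 4/B := by positivity
      linarith
    · have hsplit : (4:ℝ)/(B*(k:ℝ)) < (1 + 4/B)/(k:ℝ) := by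
        rw [add_div, div_div]
        have : 0 < 1/(k:ℝ) := by positivity
        linarith
      by_cases hc : k ≤ 2*j + 1
      · -- use positive multiples, n = j
        have hj1 : 1 ≤ j := by omega
        obtain ⟨m, hm1, hm2, hm3⟩ := lemB α B hα hB (le_of_lt hB1) hlow j hj1
        set i := j - m with hi
        have hik : i < k := by omega
        have hij : i ≠ j := by omega
        apply habs (Int.fract (Int.fract (-(i:ℝ)*α) - Int.fract (-(j:ℝ)*α)))
        · exact Set.mem_insert_of_mem _
            ⟨Int.fract (-(i:ℝ)*α), Finset.mem_image.2 ⟨i, Finset.mem_range.2 hik, rfl⟩,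
              hinj i j hij, rfl⟩
        · rw [compm i j]
          have he : (((j:ℤ) - i : ℤ):ℝ) = (m:ℝ) := by
            have : (j:ℤ) - i = (m:ℤ) := by omega
            rw [this]; push_cast; ring
          rw [he]
          have hjk : B * (k:ℝ) ≤ 4 * (B * (j:ℝ)) := by
            have hj' : (k:ℝ) ≤ 4 * (j:ℝ) := by exact_mod_cast (by omega : k ≤ 4*j)
            nlinarith
          have h4 : 1/(B*(j:ℝ)) ≤ 4/(B*(k:ℝ)) := by
            rw [div_le_div_iff₀ (by positivity) (by positivity)]
            nlinarith
          linarith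
      · -- use negative multiples, n = k - 1 - j
        set nn := k - 1 - j with hnn
        have hnn1 : 1 ≤ nn := by omega
        obtain ⟨m, hm1, hm2, hm3⟩ := lemB (-α) B hα.neg hB (le_of_lt hB1) hlowneg nn hnn1
        set i := j + m with hi
        have hik : i < k := by omega
        have hij : i ≠ j := by omega
        apply habs (Int.fract (Int.fract (-(i:ℝ)*α) - Int.fract (-(j:ℝ)*α)))
        · exact Set.mem_insert_of_mem _
            ⟨Int.fract (-(i:ℝ)*α), Finset.mem_image.2 ⟨i, Finset.mem_range.2 hik, rfl⟩,
              hinj i j hij, rfl⟩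
        · rw [compm i j]
          have he : (((j:ℤ) - i : ℤ):ℝ) * α = (m:ℝ) * (-α) := by
            have : (j:ℤ) - i = -(m:ℤ) := by omega
            rw [this]; push_cast; ring
          rw [he]
          have hjk : B * (k:ℝ) ≤ 4 * (B * (nn:ℝ)) := by
            have hj' : (k:ℝ) ≤ 4 * (nn:ℝ) := by exact_mod_cast (by omega : k ≤ 4*nn)
            nlinarith
          have h4 : 1/(B*(nn:ℝ)) ≤ 4/(B*(k:ℝ)) := by
            rw [div_le_div_iff₀ (by positivity) (by positivity)]
            nlinarith
          linarith
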